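/- arXiv:1612.04243 — 4 statements merged into one kernel-verified Lean document; each statement's English description precedes it below -/
import Mathlib

section
/- Let G be a finite group and H ≤ G a nonnormal subgroup of order 2. Let r = [Z_G(H) : H] and let q be defined by [G : H] = r + 2q. Then r and q are positive integers and r divides 2q. -/
/-- For a nonnormal subgroup `H` of order 2 of a finite group `G`, with
`r = [Z_G(H) : H]` and `[G : H] = r + 2q`, both `r` and `q` are positive and `r ∣ 2q`. -/
theorem order_two_nonnormal_r_divides_two_q {G : Type*} [Group G] [Finite G]
    (H : Subgroup G) (hcard : Nat.card H = 2) (hnn : ¬ H.Normal) (r q : ℕ)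
    (hr : r = H.relIndex (Subgroup.centralizer (H : Set G)))
    (hq : H.index = r + 2 * q) :
    0 < r ∧ 0 < q ∧ r ∣ 2 * q := by
  set C := Subgroup.centralizer (H : Set G) with hC
  haveI : Fact (Nat.Prime 2) := ⟨Nat.prime_two⟩
  haveI : IsCyclic H := isCyclic_of_prime_card hcard
  haveI hcomm : IsMulCommutative H := by
    letI := IsCyclic.commGroup (α := H)
    exact ⟨⟨mul_comm⟩⟩
  have hle : H ≤ C := Subgroup.le_centralizer H
  have hmul : H.relIndex C * C.index = H.index := Subgroup.relIndex_mul_index hle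
  have hrpos : 0 < r := by
    rw [hr]
    exact Nat.pos_of_ne_zero (Subgroup.FiniteIndex.index_ne_zero (H := H.subgroupOf C))
  have hCne : C ≠ ⊤ := by
    intro h
    apply hnn
    constructor
    intro n hn g
    have hg : g ∈ C := h ▸ Subgroup.mem_top g
    rw [Subgroup.mem_centralizer_iff] at hg
    have h1 := hg n hn
    have h2 : g * n * g⁻¹ = n := by
      rw [mul_inv_eq_iff_eq_mul]
      exact h1.symm
    rw [h2]
    exact hn
  have hCpos : 1 < C.index := by
    rcases Nat.lt_or_ge C.index 2 with h | h
    · interval_cases h' : C.index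
      · exact absurd h' (Subgroup.FiniteIndex.index_ne_zero)
      · exact absurd (Subgroup.index_eq_one.mp h') hCne
    · omega
  have key : 2 * q = r * (C.index - 1) := by
    have : r * C.index = r + 2 * q := by rw [hr, hmul, hq, hr]
    have hx := C.index
    nlinarith [Nat.sub_add_cancel (le_of_lt hCpos)]
  refine ⟨hrpos, ?_, key ▸ Dvd.intro _ rfl⟩
  have : 0 < r * (C.index - 1) := Nat.mul_pos hrpos (by omega)
  omega
end

section
/- Let r and q be positive integers with r dividing 2q, and write 2q = m·r with m even. Let G = ℤ_r × (ℤ_{m+1} ⋊ ℤ₂), where ℤ₂ acts on ℤ_{m+1} by n ↦ −n, and let H be the copy of ℤ₂ inside the semidirect product factor. Then H is a subgroup of G of order 2 with [Z_G(H) : H] = r and [G : H] = r + 2q. -/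
/-- The inversion automorphism `n ↦ -n` of `ℤ_k`, written multiplicatively. -/
noncomputable def negAut (k : ℕ) : MulAut (Multiplicative (ZMod k)) :=
  MulEquiv.inv (Multiplicative (ZMod k))

/-- The action of `ℤ₂` on `ℤ_k` by inversion, as a homomorphism into the
automorphism group. -/
noncomputable def invHom (k : ℕ) :
    Multiplicative (ZMod 2) →* MulAut (Multiplicative (ZMod k)) :=
  AddMonoidHom.toMultiplicativeLeft
    (ZMod.lift 2 ⟨zmultiplesHom _ (Additive.ofMul (negAut k)), by
      have h2 : negAut k * negAut k = 1 := by
        ext x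
        exact inv_inv x
      simp [two_zsmul, ← ofMul_mul, h2]⟩)

lemma invHom_one_apply (k : ℕ) (x : Multiplicative (ZMod k)) :
    invHom k (Multiplicative.ofAdd (1 : ZMod 2)) x = x⁻¹ := by
  have h1 : (1 : ZMod 2) = ((1 : ℤ) : ZMod 2) := by norm_num
  have h : invHom k (Multiplicative.ofAdd (1 : ZMod 2))
      = Additive.toMul (ZMod.lift 2 ⟨zmultiplesHom _ (Additive.ofMul (negAut k)), by
      have h2 : negAut k * negAut k = 1 := by
        ext x
        exact inv_inv x
      simp [two_zsmul, ← ofMul_mul, h2]⟩ (1 : ZMod 2)) := rfl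
  rw [h, h1, ZMod.lift_coe]
  simp [zmultiplesHom, negAut]

/-- A semidirect product is equivalent (as a type) to the product. -/
def sdpEquiv {N G : Type*} [Group N] [Group G] (φ : G →* MulAut N) :
    (N ⋊[φ] G) ≃ N × G where
  toFun x := (x.left, x.right)
  invFun p := ⟨p.1, p.2⟩
  left_inv _ := rfl
  right_inv _ := rfl

lemma eq_zero_of_self_add_self {m : ℕ} (hme : Even m) (y : ZMod (m + 1))
    (hy : y + y = 0) : y = 0 := by
  obtain ⟨k, hk⟩ := hme
  have h1 : ((m + 1 : ℕ) : ZMod (m + 1)) * y = 0 := by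
    rw [ZMod.natCast_self, zero_mul]
  have h2 : ((m + 2 : ℕ) : ZMod (m + 1)) * y = 0 := by
    have e : (m + 2 : ℕ) = 2 * (k + 1) := by omega
    rw [e]
    push_cast
    calc (2 * ((k : ZMod (m + 1)) + 1)) * y
        = ((k : ZMod (m + 1)) + 1) * (y + y) := by ring
      _ = 0 := by rw [hy, mul_zero]
  have h3 : ((m + 2 : ℕ) : ZMod (m + 1)) = ((m + 1 : ℕ) : ZMod (m + 1)) + 1 := by
    push_cast; ring
  rw [h3, add_mul, h1, one_mul, zero_add] at h2
  exact h2

/-- For positive integers `r, q` with `2q = m·r` and `m` even, the group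
`G = ℤ_r × (ℤ_{m+1} ⋊ ℤ₂)` (inversion action) with `H` the copy of `ℤ₂` in the
semidirect factor satisfies `|H| = 2`, `[Z_G(H) : H] = r`, `[G : H] = r + 2q`. -/
theorem exists_group_case_m_even (r q m : ℕ) (hr : 0 < r) (hq : 0 < q)
    (hm : 2 * q = m * r) (hme : Even m) :
    ∀ H : Subgroup (Multiplicative (ZMod r) ×
        (Multiplicative (ZMod (m + 1)) ⋊[invHom (m + 1)] Multiplicative (ZMod 2))),
      H = Subgroup.zpowers
          ((1, SemidirectProduct.inr (Multiplicative.ofAdd (1 : ZMod 2)))) →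
      Nat.card H = 2 ∧
      H.relIndex (Subgroup.centralizer (H : Set _)) = r ∧
      H.index = r + 2 * q := by
  haveI : NeZero r := ⟨hr.ne'⟩
  intro H hH
  subst hH
  set s : Multiplicative (ZMod 2) := Multiplicative.ofAdd (1 : ZMod 2) with hs
  set g : Multiplicative (ZMod r) ×
      (Multiplicative (ZMod (m + 1)) ⋊[invHom (m + 1)] Multiplicative (ZMod 2)) :=
    (1, SemidirectProduct.inr s) with hg
  -- order of g is 2
  have hg2 : g ^ 2 = 1 := by
    have hss : s * s = 1 := by
      rw [hs, ← ofAdd_add]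
      decide
    simp [hg, Prod.pow_mk, pow_two, ← map_mul, hss]
  have hgne : g ≠ 1 := by
    intro h
    have h' : s = 1 := congrArg (fun x => x.2.right) h
    rw [hs] at h'
    exact absurd h' (by decide)
  haveI : Fact (Nat.Prime 2) := ⟨Nat.prime_two⟩
  have horder : orderOf g = 2 := orderOf_eq_prime hg2 hgne
  have hcard : Nat.card (Subgroup.zpowers g) = 2 := by
    rw [Nat.card_zpowers, horder]
  refine ⟨hcard, ?_, ?_⟩
  · -- relindex
    set K : Subgroup (Multiplicative (ZMod r) ×
        (Multiplicative (ZMod (m + 1)) ⋊[invHom (m + 1)] Multiplicative (ZMod 2))) :=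
      (⊤ : Subgroup (Multiplicative (ZMod r))).prod
        (SemidirectProduct.inr (φ := invHom (m + 1))).range with hK
    have hcent : Subgroup.centralizer (Subgroup.zpowers g : Set _) = K := by
      ext x
      rw [Subgroup.mem_centralizer_iff, hK, Subgroup.mem_prod]
      constructor
      · intro h
        have hc := h g (Subgroup.mem_zpowers g)
        have h2 : (SemidirectProduct.inr s : _ ⋊[invHom (m + 1)] _) * x.2
            = x.2 * SemidirectProduct.inr s := congrArg Prod.snd hc
        have hleft := congrArg SemidirectProduct.left h2
        simp only [SemidirectProduct.mul_left, SemidirectProduct.left_inr,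
          SemidirectProduct.right_inr, one_mul, map_one, mul_one] at hleft
        rw [hs, invHom_one_apply] at hleft
        -- hleft : x.2.left⁻¹ = x.2.left
        have hy : Multiplicative.toAdd x.2.left + Multiplicative.toAdd x.2.left = 0 := by
          have h4 := congrArg Multiplicative.toAdd hleft
          rw [toAdd_inv] at h4
          nth_rewrite 1 [← h4]
          exact neg_add_cancel _
        have hx1 : x.2.left = 1 := by
          have := eq_zero_of_self_add_self hme _ hy
          exact this
        refine ⟨trivial, x.2.right, ?_⟩
        ext
        · simp [hx1]
        · simp
      · rintro ⟨-, t, ht⟩ y hy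
        obtain ⟨n, rfl⟩ := Subgroup.mem_zpowers_iff.mp hy
        have hcomm : Commute g x := by
          have h1 : (g * x).1 = (x * g).1 := by
            simp [hg, mul_comm]
          have h2 : (g * x).2 = (x * g).2 := by
            simp only [Prod.snd_mul, hg]
            rw [← ht, ← map_mul, ← map_mul, mul_comm]
          exact Prod.ext h1 h2
        exact (hcomm.zpow_left n).eq
    have hle : Subgroup.zpowers g ≤ K := by
      rw [Subgroup.zpowers_le, hK]
      exact Subgroup.mem_prod.mpr ⟨trivial, s, rfl⟩
    have hKcard : Nat.card K = 2 * r := by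
      rw [hK, Nat.card_congr (Subgroup.prodEquiv _ _).toEquiv, Nat.card_prod,
        Subgroup.card_top,
        Nat.card_congr (MonoidHom.ofInjective SemidirectProduct.inr_injective).toEquiv.symm,
        Nat.card_congr Multiplicative.toAdd, Nat.card_congr Multiplicative.toAdd,
        Nat.card_zmod, Nat.card_zmod]
      ring
    rw [hcent]
    show ((Subgroup.zpowers g).subgroupOf K).index = r
    have hmi := Subgroup.card_mul_index ((Subgroup.zpowers g).subgroupOf K)
    have hsub : Nat.card ((Subgroup.zpowers g).subgroupOf K) = 2 := by
      rw [Nat.card_congr (Subgroup.subgroupOfEquivOfLe hle).toEquiv, hcard]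
    rw [hsub, hKcard] at hmi
    omega
  · -- index
    have hG : Nat.card (Multiplicative (ZMod r) ×
        (Multiplicative (ZMod (m + 1)) ⋊[invHom (m + 1)] Multiplicative (ZMod 2))) =
        r * ((m + 1) * 2) := by
      rw [Nat.card_prod, Nat.card_congr (sdpEquiv _), Nat.card_prod]
      rw [Nat.card_congr Multiplicative.toAdd, Nat.card_congr Multiplicative.toAdd,
        Nat.card_congr Multiplicative.toAdd, Nat.card_zmod, Nat.card_zmod, Nat.card_zmod]
    have hmi := Subgroup.card_mul_index (Subgroup.zpowers g)
    rw [hcard, hG] at hmi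
    have he : r * ((m + 1) * 2) = 2 * (r * (m + 1)) := by ring
    rw [he] at hmi
    have hidx : (Subgroup.zpowers g).index = r * (m + 1) := by omega
    rw [hidx]
    have h2 : m * r = 2 * q := hm.symm
    have : r * (m + 1) = m * r + r := by ring
    omega
end

section
/- For every pair of positive integers (r, q), there exists a finite group G with a nonnormal subgroup H of order 2 such that [Z_G(H) : H] = r and [G : H] = r + 2q, if and only if r divides 2q. -/
open DihedralGroup Subgroup

-- centralizer of zpowers = centralizer of singleton
lemma centralizer_zpowers_eq {G : Type*} [Group G] (e : G) :
    Subgroup.centralizer ((Subgroup.zpowers e : Subgroup G) : Set G)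
      = Subgroup.centralizer {e} := by
  ext x
  simp only [Subgroup.mem_centralizer_iff, Set.mem_singleton_iff, SetLike.mem_coe]
  constructor
  · intro h g hg
    rw [hg]
    exact h e (Subgroup.mem_zpowers e)
  · rintro h g hg
    obtain ⟨m, rfl⟩ := hg
    have hc : Commute e x := h e rfl
    exact (hc.zpow_left m).eq

lemma centralizer_pair {G N : Type*} [Group G] [Group N] (a : G) (b : N) :
    Subgroup.centralizer ({(a, b)} : Set (G × N))
      = (Subgroup.centralizer {a}).prod (Subgroup.centralizer {b}) := by
  ext ⟨x, y⟩
  simp [Subgroup.mem_centralizer_iff, Subgroup.mem_prod, Prod.ext_iff]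

lemma centralizer_one {G : Type*} [Group G] :
    Subgroup.centralizer ({1} : Set G) = ⊤ := by
  ext x
  simp [Subgroup.mem_centralizer_iff]

lemma cent_sr_odd (n : ℕ) (hn : Odd n) :
    (Subgroup.centralizer ({DihedralGroup.sr 0} : Set (DihedralGroup n)) : Set (DihedralGroup n))
      = {1, DihedralGroup.sr 0} := by
  ext x
  simp only [SetLike.mem_coe, Subgroup.mem_centralizer_iff, Set.mem_singleton_iff,
    Set.mem_insert_iff, forall_eq]
  constructor
  · intro h
    cases x with
    | r i =>
      rw [sr_mul_r, r_mul_sr] at h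
      have hii : -i = i := by
        have := sr.injEq (n := n) (0 + i) (0 - i) ▸ h
        simpa using (DihedralGroup.sr.inj h).symm
      rcases (ZMod.neg_eq_self_iff i).mp hii with h0 | h2
      · left; rw [h0, ← one_def]
      · exfalso
        obtain ⟨j, hj⟩ := hn
        omega
    | sr i =>
      rw [sr_mul_sr, sr_mul_sr] at h
      have hii : -i = i := by simpa using (DihedralGroup.r.inj h).symm
      rcases (ZMod.neg_eq_self_iff i).mp hii with h0 | h2
      · right; rw [h0]
      · exfalso
        obtain ⟨j, hj⟩ := hn
        omega
  · rintro (rfl | rfl)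
    · simp
    · simp

lemma cent_sr_even (t : ℕ) (ht : 0 < t) :
    (Subgroup.centralizer ({DihedralGroup.sr 0} : Set (DihedralGroup (2 * t))) :
        Set (DihedralGroup (2 * t)))
      = {1, DihedralGroup.r (t : ZMod (2 * t)), DihedralGroup.sr 0,
          DihedralGroup.sr (t : ZMod (2 * t))} := by
  haveI : NeZero (2 * t) := ⟨by omega⟩
  have hval : ((t : ZMod (2 * t))).val = t := ZMod.val_natCast_of_lt (by omega)
  ext x
  simp only [SetLike.mem_coe, Subgroup.mem_centralizer_iff, Set.mem_singleton_iff,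
    Set.mem_insert_iff, forall_eq]
  constructor
  · intro h
    cases x with
    | r i =>
      rw [sr_mul_r, r_mul_sr] at h
      have hii : -i = i := by simpa using (DihedralGroup.sr.inj h).symm
      rcases (ZMod.neg_eq_self_iff i).mp hii with h0 | h2
      · left; rw [h0, ← one_def]
      · right; left
        have : i.val = t := by omega
        rw [← ZMod.natCast_zmod_val i, this]
    | sr i =>
      rw [sr_mul_sr, sr_mul_sr] at h
      have hii : -i = i := by simpa using (DihedralGroup.r.inj h).symm
      rcases (ZMod.neg_eq_self_iff i).mp hii with h0 | h2
      · right; right; left; rw [h0]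
      · right; right; right
        have : i.val = t := by omega
        rw [← ZMod.natCast_zmod_val i, this]
  · rintro (rfl | rfl | rfl | rfl)
    · simp
    · simp only [sr_mul_r, r_mul_sr]
      congr 1
      rw [zero_add, zero_sub]
      have : -(t : ZMod (2*t)) = t := by
        rw [ZMod.neg_eq_self_iff]
        right; rw [hval]
      rw [this]
    · simp
    · simp only [sr_mul_sr]
      congr 1
      rw [sub_zero, zero_sub]
      have : -(t : ZMod (2*t)) = t := by
        rw [ZMod.neg_eq_self_iff]
        right; rw [hval]
      rw [this]

lemma card_cent_sr_odd (n : ℕ) (hn : Odd n) :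
    Nat.card (Subgroup.centralizer ({DihedralGroup.sr 0} : Set (DihedralGroup n))) = 2 := by
  have h0 : 0 < n := hn.pos
  haveI : NeZero n := ⟨h0.ne'⟩
  rw [← SetLike.coe_sort_coe, cent_sr_odd n hn, Nat.card_coe_set_eq]
  rw [Set.ncard_insert_of_notMem (by simp [one_def, -r_zero]), Set.ncard_singleton]

lemma card_cent_sr_even (t : ℕ) (ht : 0 < t) :
    Nat.card (Subgroup.centralizer ({DihedralGroup.sr 0} : Set (DihedralGroup (2 * t)))) = 4 := by
  haveI : NeZero (2 * t) := ⟨by omega⟩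
  have htne : (t : ZMod (2 * t)) ≠ 0 := by
    rw [Ne, ZMod.natCast_eq_zero_iff]
    intro hdvd
    exact absurd (Nat.le_of_dvd ht hdvd) (by omega)
  rw [← SetLike.coe_sort_coe, cent_sr_even t ht, Nat.card_coe_set_eq]
  rw [Set.ncard_insert_of_notMem (by simp [one_def, -r_zero, htne.symm]),
    Set.ncard_insert_of_notMem (by simp),
    Set.ncard_insert_of_notMem (by simp [htne.symm]), Set.ncard_singleton]

lemma master (k n c : ℕ) (hk : 0 < k) (hn : 3 ≤ n)
    (hc : Nat.card (Subgroup.centralizer ({DihedralGroup.sr 0} : Set (DihedralGroup n))) = 2 * c) :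
    ∃ (G : Type) (_ : Group G) (_ : Finite G) (H : Subgroup G),
        ¬ H.Normal ∧ Nat.card H = 2 ∧
        H.relIndex (Subgroup.centralizer (H : Set G)) = k * c ∧
        H.index = k * n := by
  haveI : NeZero k := ⟨hk.ne'⟩
  haveI : NeZero n := ⟨by omega⟩
  set G := Multiplicative (ZMod k) × DihedralGroup n with hGdef
  set e : G := (1, DihedralGroup.sr 0) with hedef
  have he2 : orderOf e = 2 := by
    rw [hedef, Prod.orderOf_mk, orderOf_one, DihedralGroup.orderOf_sr, Nat.lcm_one_left]
  set H : Subgroup G := Subgroup.zpowers e with hHdef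
  have hcardH : Nat.card H = 2 := by rw [hHdef, Nat.card_zpowers, he2]
  have hcardG : Nat.card G = k * (2 * n) := by
    rw [hGdef, Nat.card_prod, DihedralGroup.nat_card]
    congr 1
    exact (Nat.card_congr (Multiplicative.toAdd)).trans (Nat.card_zmod k)
  have hZ : Subgroup.centralizer (H : Set G)
      = (⊤ : Subgroup (Multiplicative (ZMod k))).prod
          (Subgroup.centralizer {DihedralGroup.sr 0}) := by
    rw [hHdef, centralizer_zpowers_eq, hedef, centralizer_pair, centralizer_one]
  have hcardZ : Nat.card (Subgroup.centralizer (H : Set G)) = k * (2 * c) := by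
    rw [hZ, Nat.card_congr (Subgroup.prodEquiv _ _).toEquiv, Nat.card_prod,
      Subgroup.card_top, hc]
    congr 1
    exact (Nat.card_congr (Multiplicative.toAdd)).trans (Nat.card_zmod k)
  have hle : H ≤ Subgroup.centralizer (H : Set G) := Subgroup.le_centralizer H
  refine ⟨G, inferInstance, inferInstance, H, ?_, hcardH, ?_, ?_⟩
  · -- nonnormal
    intro hN
    set g : G := (1, DihedralGroup.r 1) with hgdef
    have hmem := hN.conj_mem e (Subgroup.mem_zpowers e) g
    have hconj : g * e * g⁻¹ = ((1, DihedralGroup.sr (-2)) : G) := by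
      rw [mul_inv_eq_iff_eq_mul]
      show ((1, DihedralGroup.r 1) : G) * (1, DihedralGroup.sr 0)
          = ((1, DihedralGroup.sr (-2)) : G) * (1, DihedralGroup.r 1)
      rw [Prod.mk_mul_mk, Prod.mk_mul_mk, DihedralGroup.r_mul_sr, DihedralGroup.sr_mul_r,
        one_mul]
      refine congrArg _ ?_
      refine congrArg _ ?_
      ring
    rw [hconj] at hmem
    obtain ⟨m, hm⟩ := Subgroup.mem_zpowers_iff.mp hmem
    rw [← zpow_mod_orderOf, he2] at hm
    push_cast at hm
    have h2 : ((2 : ℕ) : ZMod n) ≠ 0 := by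
      rw [Ne, ZMod.natCast_eq_zero_iff]
      intro hdvd
      have := Nat.le_of_dvd (by norm_num) hdvd
      omega
    rcases Int.emod_two_eq m with h | h <;> rw [h] at hm
    · rw [zpow_zero] at hm
      have h2nd : (1 : DihedralGroup n) = DihedralGroup.sr (-2) := congrArg Prod.snd hm
      rw [DihedralGroup.one_def] at h2nd
      cases h2nd
    · rw [zpow_one, hedef] at hm
      have h2nd : DihedralGroup.sr (0 : ZMod n) = DihedralGroup.sr (-2) :=
        congrArg Prod.snd hm
      have h0 : (0 : ZMod n) = -2 := DihedralGroup.sr.inj h2nd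
      apply h2
      have : (-2 : ZMod n) = 0 := h0.symm
      rw [neg_eq_zero] at this
      exact_mod_cast this
  · -- relindex
    have hsub : Nat.card (H.subgroupOf (Subgroup.centralizer (H : Set G))) = 2 :=
      (Nat.card_congr (Subgroup.subgroupOfEquivOfLe hle).toEquiv).trans hcardH
    have hmi := Subgroup.card_mul_index (H.subgroupOf (Subgroup.centralizer (H : Set G)))
    rw [hsub, hcardZ] at hmi
    rw [Subgroup.relIndex]
    refine Nat.eq_of_mul_eq_mul_left (show 0 < 2 by norm_num) ?_
    rw [hmi]; ring
  · -- index
    have hmi := Subgroup.card_mul_index H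
    rw [hcardH, hcardG] at hmi
    refine Nat.eq_of_mul_eq_mul_left (show 0 < 2 by norm_num) ?_
    rw [hmi]; ring


/-- A pair `(r, q)` of positive integers arises as `r = [Z_G(H) : H]`,
`[G : H] = r + 2q` for a nonnormal subgroup `H ≃ ℤ₂` of a finite group `G`
if and only if `r ∣ 2q`. -/
theorem exists_group_iff_r_dvd_two_q (r q : ℕ) (hr : 0 < r) (hq : 0 < q) :
    (∃ (G : Type) (_ : Group G) (_ : Finite G) (H : Subgroup G),
        ¬ H.Normal ∧ Nat.card H = 2 ∧
        H.relIndex (Subgroup.centralizer (H : Set G)) = r ∧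
        H.index = r + 2 * q) ↔ r ∣ 2 * q := by
  constructor
  · rintro ⟨G, _, _, H, hN, h2, hrel, hidx⟩
    haveI : Fact (Nat.Prime 2) := ⟨Nat.prime_two⟩
    haveI hcyc : IsCyclic H := isCyclic_of_prime_card h2
    haveI hcomm : IsMulCommutative H := by
      obtain ⟨g, hg⟩ := hcyc.exists_generator
      constructor
      constructor
      intro a b
      obtain ⟨i, hi⟩ := hg a
      obtain ⟨j, hj⟩ := hg b
      rw [← hi, ← hj, ← zpow_add, ← zpow_add, add_comm]
    have hle : H ≤ Subgroup.centralizer (H : Set G) :=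
      Subgroup.le_centralizer_iff_isMulCommutative.mpr hcomm
    have hmul := Subgroup.relIndex_mul_index hle
    rw [hrel, hidx] at hmul
    have hdvd : r ∣ r + 2 * q := ⟨_, hmul.symm⟩
    exact (Nat.dvd_add_right dvd_rfl).mp hdvd
  · rintro ⟨m, hm⟩
    have hm1 : 1 ≤ m := by
      rcases Nat.eq_zero_or_pos m with h0 | h1
      · rw [h0, mul_zero] at hm; omega
      · exact h1
    rcases Nat.even_or_odd m with ⟨a, ha⟩ | hodd
    · have ha1 : 1 ≤ a := by omega
      obtain ⟨G, gi, fi, H, hN, h2, hrel, hidx⟩ :=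
        master r (m + 1) 1 hr (by omega) (by
          rw [card_cent_sr_odd (m + 1) ⟨a, by omega⟩])
      refine ⟨G, gi, fi, H, hN, h2, by rw [hrel, mul_one], ?_⟩
      rw [hidx, hm]
      ring
    · have heven : Even r := by
        have hrm : r * m = q + q := by omega
        rcases Nat.even_mul.mp ⟨q, hrm⟩ with h | h
        · exact h
        · exact absurd h (Nat.not_even_iff_odd.mpr hodd)
      obtain ⟨k, hk⟩ := heven
      have hk1 : 1 ≤ k := by omega
      obtain ⟨G, gi, fi, H, hN, h2, hrel, hidx⟩ :=
        master k (2 * (m + 1)) 2 hk1 (by omega) (by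
          rw [card_cent_sr_even (m + 1) (by omega)])
      refine ⟨G, gi, fi, H, hN, h2, by rw [hrel]; omega, ?_⟩
      rw [hidx, hm, hk]
      ring
end

section
/- Let p > q > 0 be integers with a = gcd(p, q), u = p/a, v = q/a, and g = u² − v². Let B = [[p, q], [q, p]] acting on ℤ². Then ℤ²/B(ℤ²) ≅ ℤ_a ⊕ ℤ_{a·g}; moreover if z, w ∈ ℤ satisfy zu + wv = 1, then under a suitable such isomorphism the class of (1,1) corresponds to (z + w mod a, u − v mod a·g). -/
/-- For integers `p > q > 0` with `a = gcd(p,q)`, `u = p/a`, `v = q/a`, `g = u² − v²`,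
the cokernel of `B = [[p, q], [q, p]]` on `ℤ²` is `ℤ_a ⊕ ℤ_{a·g}`, and if `zu + wv = 1`
then the class of `(1,1)` corresponds to `(z + w, u − v)`. -/
theorem coker_matrix_general (p q a u v g : ℕ) (hq : 0 < q) (hpq : q < p)
    (ha : a = Nat.gcd p q) (hu : u = p / a) (hv : v = q / a) (hg : g = u ^ 2 - v ^ 2)
    (z w : ℤ) (hzw : z * u + w * v = 1) :
    ∃ e : ((Fin 2 → ℤ) ⧸
        LinearMap.range (Matrix.toLin' !![(p : ℤ), q; q, p])) ≃+ ZMod a × ZMod (a * g),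
      e (Submodule.Quotient.mk ![1, 1]) =
        (((z + w : ℤ) : ZMod a), ((u : ZMod (a * g)) - (v : ZMod (a * g)))) := by
  have hap : a ∣ p := ha ▸ Nat.gcd_dvd_left p q
  have haq : a ∣ q := ha ▸ Nat.gcd_dvd_right p q
  have hpau : p = a * u := by rw [hu, Nat.mul_div_cancel' hap]
  have hqav : q = a * v := by rw [hv, Nat.mul_div_cancel' haq]
  have hvu : v < u := by
    rw [hpau, hqav] at hpq
    exact lt_of_mul_lt_mul_left hpq (Nat.zero_le a)
  have hgZ : (g : ℤ) = (u : ℤ) ^ 2 - (v : ℤ) ^ 2 := by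
    have h2 : v ^ 2 ≤ u ^ 2 := Nat.pow_le_pow_left hvu.le 2
    rw [hg, Nat.cast_sub h2]; push_cast; ring
  have hpZ : (p : ℤ) = (a : ℤ) * u := by exact_mod_cast congrArg (Nat.cast : ℕ → ℤ) hpau
  have hqZ : (q : ℤ) = (a : ℤ) * v := by exact_mod_cast congrArg (Nat.cast : ℕ → ℤ) hqav
  -- the map
  let f : (Fin 2 → ℤ) →ₗ[ℤ] ZMod a × ZMod (a * g) :=
  { toFun := fun x => (((z * x 0 + w * x 1 : ℤ) : ZMod a),
      (((u : ℤ) * x 1 - (v : ℤ) * x 0 : ℤ) : ZMod (a * g)))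
    map_add' := by
      intro x y
      simp only [Pi.add_apply, Prod.mk_add_mk, Prod.mk.injEq]
      constructor <;> push_cast <;> ring
    map_smul' := by
      intro c x
      simp only [Pi.smul_apply, smul_eq_mul, RingHom.id_apply, Prod.smul_mk, zsmul_eq_mul,
        Prod.mk.injEq]
      constructor <;> push_cast <;> ring }
  have hfapply : ∀ x : Fin 2 → ℤ, f x = (((z * x 0 + w * x 1 : ℤ) : ZMod a),
      (((u : ℤ) * x 1 - (v : ℤ) * x 0 : ℤ) : ZMod (a * g))) := fun _ => rfl
  have hker : LinearMap.ker f = LinearMap.range (Matrix.toLin' !![(p : ℤ), q; q, p]) := by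
    ext x
    simp only [LinearMap.mem_ker, LinearMap.mem_range, Matrix.toLin'_apply, hfapply,
      Prod.mk_eq_zero, ZMod.intCast_zmod_eq_zero_iff_dvd, Nat.cast_mul]
    constructor
    · rintro ⟨⟨m, hm⟩, ⟨n, hn⟩⟩
      rw [hgZ] at hn
      refine ⟨![m - (z * v + w * u) * n, n], ?_⟩
      funext i
      fin_cases i
      · simp [Matrix.mulVec, dotProduct, Fin.sum_univ_two, hpZ, hqZ]
        linear_combination (-(u : ℤ)) * hm + w * hn + (x 0 - (a : ℤ) * v * n) * hzw
      · simp [Matrix.mulVec, dotProduct, Fin.sum_univ_two, hpZ, hqZ]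
        linear_combination (-(v : ℤ)) * hm - z * hn + (x 1 - (a : ℤ) * u * n) * hzw
    · rintro ⟨c, rfl⟩
      constructor
      · refine ⟨z * ((u : ℤ) * c 0 + v * c 1) + w * ((v : ℤ) * c 0 + u * c 1), ?_⟩
        simp [Matrix.mulVec, dotProduct, Fin.sum_univ_two, hpZ, hqZ]
        ring
      · refine ⟨c 1, ?_⟩
        simp [Matrix.mulVec, dotProduct, Fin.sum_univ_two, hpZ, hqZ, hgZ]
        ring
  have hsurjf : Function.Surjective f := by
    rintro ⟨s, t⟩
    obtain ⟨s', rfl⟩ := ZMod.intCast_surjective s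
    obtain ⟨t', rfl⟩ := ZMod.intCast_surjective t
    refine ⟨![(u : ℤ) * s' - w * t', (v : ℤ) * s' + z * t'], ?_⟩
    rw [hfapply]
    simp only [Matrix.cons_val_zero, Matrix.cons_val_one, Matrix.head_cons, Prod.mk.injEq]
    constructor
    · congr 1
      linear_combination s' * hzw
    · congr 1
      linear_combination t' * hzw
  have hle : LinearMap.range (Matrix.toLin' !![(p : ℤ), q; q, p]) ≤ LinearMap.ker f := hker.ge
  set fbar := Submodule.liftQ _ f hle with hfbar
  have hinj : Function.Injective fbar := by
    rw [← LinearMap.ker_eq_bot]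
    exact Submodule.ker_liftQ_eq_bot _ _ _ hker.le
  have hsurj : Function.Surjective fbar := by
    intro y
    obtain ⟨x, hx⟩ := hsurjf y
    exact ⟨Submodule.Quotient.mk x, by rwa [hfbar, Submodule.liftQ_apply]⟩
  refine ⟨(LinearEquiv.ofBijective fbar ⟨hinj, hsurj⟩).toAddEquiv, ?_⟩
  show fbar (Submodule.Quotient.mk ![1, 1]) = _
  rw [hfbar, Submodule.liftQ_apply, hfapply]
  simp only [Matrix.cons_val_zero, Matrix.cons_val_one, Matrix.head_cons, Prod.mk.injEq]
  constructor
  · push_cast; ring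
  · push_cast; ring
end
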